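/- arXiv:1709.06803 — 5 statements merged into one kernel-verified Lean document; each statement's English description precedes it below -/
import Mathlib

section
/- Let F(x) = Σ_{s=1}^{n} κ_s f_s(x) be the Lagrange interpolation polynomial at pairwise distinct nodes a_1,...,a_n with values κ_1,...,κ_n, and write F(x) = Σ_{i=0}^{n-1} F_i x^i. Then there exists a rational function M_1 of (a_1,...,a_n,κ_1,...,κ_n) such that ∂F_i/∂a_1 = M_1 · ∂F_i/∂κ_1 for every i = 0,...,n-1 (the same M_1 for all i). Explicitly, M_1 = M_1' · ∏_{j=2}^{n}(a_1 - a_j), where M_1' = ∂/∂a_1 [κ_1/∏_{j=2}^{n}(a_1-a_j)] + Σ_{s=2}^{n} κ_s / [(a_s - a_1)^2 ∏_{j≠1,s}(a_s - a_j)]. -/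
open Finset
open Polynomial


private lemma prodBD {ι : Type*} (x : ℂ) (S : Finset ι) (b : ι → ℂ) :
    ∏ j ∈ S, Lagrange.basisDivisor x (b j)
      = C (∏ j ∈ S, (x - b j))⁻¹ * ∏ j ∈ S, (X - C (b j)) := by
  simp_rw [Lagrange.basisDivisor, Finset.prod_mul_distrib, ← map_prod,
    Finset.prod_inv_distrib]

private lemma keyIdentity {n : ℕ} (a κ : Fin n → ℂ) (k : Fin n)
    (t : ℂ) (ht : ∀ j ∈ univ.erase k, t ≠ a j) :
    Lagrange.interpolate Finset.univ (Function.update a k t) κ =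
      C (κ k / ∏ j ∈ univ.erase k, (t - a j)
         + ∑ s ∈ univ.erase k, κ s / ((a s - t) * ∏ j ∈ (univ.erase k).erase s, (a s - a j)))
        * ∏ j ∈ univ.erase k, (X - C (a j))
      + ∑ s ∈ univ.erase k,
          C (κ s * (∏ j ∈ (univ.erase k).erase s, (a s - a j))⁻¹)
            * ∏ j ∈ (univ.erase k).erase s, (X - C (a j)) := by
  rw [Lagrange.interpolate_apply, ← Finset.add_sum_erase _ _ (mem_univ k)]
  have hbk : Lagrange.basis univ (Function.update a k t) k
      = C (∏ j ∈ univ.erase k, (t - a j))⁻¹ * ∏ j ∈ univ.erase k, (X - C (a j)) := by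
    rw [Lagrange.basis]
    rw [Finset.prod_congr rfl (fun j hj => by
      rw [Function.update_self, Function.update_of_ne (Finset.ne_of_mem_erase hj)] : ∀ j ∈ univ.erase k, Lagrange.basisDivisor (Function.update a k t k)
        (Function.update a k t j) = Lagrange.basisDivisor t (a j))]
    exact prodBD t _ a
  have hbs : ∀ s ∈ univ.erase k, C (κ s) * Lagrange.basis univ (Function.update a k t) s
      = C (κ s / ((a s - t) * ∏ j ∈ (univ.erase k).erase s, (a s - a j)))
          * ∏ j ∈ univ.erase k, (X - C (a j))
        + C (κ s * (∏ j ∈ (univ.erase k).erase s, (a s - a j))⁻¹)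
          * ∏ j ∈ (univ.erase k).erase s, (X - C (a j)) := by
    intro s hs
    have hsk : s ≠ k := Finset.ne_of_mem_erase hs
    have hts : a s - t ≠ 0 := sub_ne_zero.mpr (Ne.symm (ht s hs))
    have hk : k ∈ univ.erase s := Finset.mem_erase.mpr ⟨hsk.symm, mem_univ k⟩
    have h1 : Lagrange.basis univ (Function.update a k t) s
        = Lagrange.basisDivisor (a s) t
            * ∏ j ∈ (univ.erase k).erase s, Lagrange.basisDivisor (a s) (a j) := by
      rw [Lagrange.basis, ← Finset.mul_prod_erase _ _ hk, Finset.erase_right_comm,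
        Function.update_self, Function.update_of_ne hsk]
      exact congrArg _ (Finset.prod_congr rfl fun j hj => by
        rw [Function.update_of_ne (Finset.ne_of_mem_erase (Finset.mem_of_mem_erase hj))])
    have h3 : Lagrange.basisDivisor (a s) t = C (a s - t)⁻¹ * (X - C (a s)) + 1 := by
      rw [Lagrange.basisDivisor,
        show (X - C t : ℂ[X]) = (X - C (a s)) + C (a s - t) by rw [map_sub]; ring,
        mul_add, ← map_mul, inv_mul_cancel₀ hts, map_one]
    have h4 : (X - C (a s)) * ∏ j ∈ (univ.erase k).erase s, (X - C (a j))
        = ∏ j ∈ univ.erase k, (X - C (a j)) :=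
      Finset.mul_prod_erase (univ.erase k) (fun j => X - C (a j)) hs
    rw [h1, prodBD, h3, ← h4, div_eq_mul_inv, mul_inv, ← mul_assoc, map_mul, map_mul, map_mul]
    ring
  rw [hbk, Finset.sum_congr rfl hbs, Finset.sum_add_distrib, ← Finset.sum_mul, ← map_sum,
    map_add, div_eq_mul_inv, map_mul]
  ring


/-- Lemma `commfact` for the node `a k`, playing the role of `a_1`:
there exists a quantity `M₁` (explicitly given) such that for every coefficient index `i`,
`∂F_i/∂a_1 = M₁ · ∂F_i/∂κ_1`, where `F_i` is the `i`-th coefficient of the Lagrange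
interpolation polynomial through the points `(a_s, κ_s)`.  Explicitly,
`M₁ = M₁' · ∏_{j≠1}(a_1 - a_j)` with
`M₁' = ∂/∂a_1 [κ_1/∏_{j≠1}(a_1-a_j)] + Σ_{s≠1} κ_s/((a_s-a_1)^2 ∏_{j≠1,s}(a_s-a_j))`. -/
theorem lagrange_coeff_commfact (n : ℕ) (a κ : Fin n → ℂ)
    (ha : Function.Injective a) (k : Fin n) :
    ∃ M : ℂ,
      (∀ i : ℕ,
        deriv (fun t : ℂ =>
            (Lagrange.interpolate Finset.univ (Function.update a k t) κ).coeff i) (a k)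
        = M * deriv (fun t : ℂ =>
            (Lagrange.interpolate Finset.univ a (Function.update κ k t)).coeff i) (κ k))
      ∧ M = (deriv (fun t : ℂ => κ k / ∏ j ∈ Finset.univ.erase k, (t - a j)) (a k)
              + ∑ s ∈ Finset.univ.erase k,
                  κ s / ((a s - a k) ^ 2 *
                    ∏ j ∈ (Finset.univ.erase k).erase s, (a s - a j)))
            * ∏ j ∈ Finset.univ.erase k, (a k - a j) := by
    classical
  have hne : ∀ j ∈ univ.erase k, a k ≠ a j := fun j hj h =>
    Finset.ne_of_mem_erase hj (ha h.symm)
  have hD : (∏ j ∈ univ.erase k, (a k - a j)) ≠ 0 :=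
    Finset.prod_ne_zero_iff.mpr fun j hj => sub_ne_zero.mpr (hne j hj)
  -- derivative of the first piece
  set g₁ : ℂ → ℂ := fun t => κ k / ∏ j ∈ univ.erase k, (t - a j) with hg₁
  have hd1 : HasDerivAt g₁ (deriv g₁ (a k)) (a k) := by
    refine DifferentiableAt.hasDerivAt ?_
    refine (differentiableAt_const _).div ?_ hD
    exact DifferentiableAt.fun_finsetProd fun j _ =>
      (differentiableAt_id.sub (differentiableAt_const _))
  -- derivative of the sum piece
  have hd2 : ∀ s ∈ univ.erase k,
      HasDerivAt (fun t : ℂ => κ s / ((a s - t) * ∏ j ∈ (univ.erase k).erase s, (a s - a j)))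
        (κ s / ((a s - a k) ^ 2 * ∏ j ∈ (univ.erase k).erase s, (a s - a j))) (a k) := by
    intro s hs
    have hcs : (∏ j ∈ (univ.erase k).erase s, (a s - a j)) ≠ 0 := by
      refine Finset.prod_ne_zero_iff.mpr fun j hj => sub_ne_zero.mpr fun h => ?_
      exact Finset.ne_of_mem_erase hj (ha h).symm
    have hsk : a s - a k ≠ 0 := sub_ne_zero.mpr fun h =>
      Finset.ne_of_mem_erase hs (ha h)
    have hden : (a s - a k) * ∏ j ∈ (univ.erase k).erase s, (a s - a j) ≠ 0 :=
      mul_ne_zero hsk hcs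
    have h := (hasDerivAt_const (a k) (κ s)).div
      (((hasDerivAt_id (a k)).const_sub (a s)).mul_const
        (∏ j ∈ (univ.erase k).erase s, (a s - a j))) hden
    refine h.congr_deriv ?_
    simp only [id]
    field_simp
    ring
  set g : ℂ → ℂ := fun t => g₁ t
    + ∑ s ∈ univ.erase k, κ s / ((a s - t) * ∏ j ∈ (univ.erase k).erase s, (a s - a j))
    with hg
  have hdg : HasDerivAt g
      (deriv g₁ (a k) + ∑ s ∈ univ.erase k,
        κ s / ((a s - a k) ^ 2 * ∏ j ∈ (univ.erase k).erase s, (a s - a j))) (a k) :=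
    hd1.add (HasDerivAt.fun_sum hd2)
  set P : ℂ[X] := ∏ j ∈ univ.erase k, (X - C (a j)) with hP
  set Rp : ℂ[X] := ∑ s ∈ univ.erase k,
      C (κ s * (∏ j ∈ (univ.erase k).erase s, (a s - a j))⁻¹)
        * ∏ j ∈ (univ.erase k).erase s, (X - C (a j)) with hRp
  refine ⟨_, fun i => ?_, rfl⟩
  -- LHS
  have hev : (fun t : ℂ =>
      (Lagrange.interpolate Finset.univ (Function.update a k t) κ).coeff i)
      =ᶠ[nhds (a k)] fun t => g t * P.coeff i + Rp.coeff i := by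
    have : ∀ᶠ t in nhds (a k), ∀ j ∈ univ.erase k, t ≠ a j :=
      (Finset.eventually_all _).mpr fun j hj => eventually_ne_nhds (hne j hj)
    filter_upwards [this] with t ht
    rw [keyIdentity a κ k t ht, coeff_add, coeff_C_mul]
  have hLHS : deriv (fun t : ℂ =>
      (Lagrange.interpolate Finset.univ (Function.update a k t) κ).coeff i) (a k)
      = (deriv g₁ (a k) + ∑ s ∈ univ.erase k,
          κ s / ((a s - a k) ^ 2 * ∏ j ∈ (univ.erase k).erase s, (a s - a j)))
        * P.coeff i := by
    rw [hev.deriv_eq]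
    exact ((hdg.mul_const _).add_const _).deriv
  -- RHS
  have hbasis : Lagrange.basis univ a k
      = C (∏ j ∈ univ.erase k, (a k - a j))⁻¹ * P := by
    rw [Lagrange.basis]; exact prodBD _ _ _
  have hRHS : deriv (fun t : ℂ =>
      (Lagrange.interpolate Finset.univ a (Function.update κ k t)).coeff i) (κ k)
      = (∏ j ∈ univ.erase k, (a k - a j))⁻¹ * P.coeff i := by
    have heq : (fun t : ℂ =>
        (Lagrange.interpolate Finset.univ a (Function.update κ k t)).coeff i)
        = fun t => t * (Lagrange.basis univ a k).coeff i
          + ∑ s ∈ univ.erase k, (C (κ s) * Lagrange.basis univ a s).coeff i := by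
      funext t
      rw [Lagrange.interpolate_apply, ← Finset.add_sum_erase _ _ (mem_univ k),
        Function.update_self, coeff_add, coeff_C_mul, finset_sum_coeff]
      congr 1
      refine Finset.sum_congr rfl fun s hs => ?_
      rw [Function.update_of_ne (Finset.ne_of_mem_erase hs)]
    rw [heq, deriv_add_const]
    rw [hbasis, coeff_C_mul]
    simp [(((hasDerivAt_id (κ k)).mul_const ((P.coeff i) * (∏ j ∈ univ.erase k, (a k - a j))⁻¹))).deriv]
  rw [hLHS, hRHS]
  field_simp
end

section
/- The coefficients F_0,...,F_{n-1} of the Lagrange interpolation polynomial, viewed as functions of the nodes a_1,...,a_n and values κ_1,...,κ_n, pairwise Poisson-commute with respect to the canonical Poisson bracket: {F_i, F_j} = Σ_{k=1}^{n} (∂F_i/∂a_k · ∂F_j/∂κ_k − ∂F_j/∂a_k · ∂F_i/∂κ_k) = 0 for all 0 ≤ i, j ≤ n−1. -/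
open Finset Polynomial

namespace LagrangePoissonAux

variable {n : ℕ}

lemma basis_eq (a : Fin n → ℂ) (k : Fin n) :
    Lagrange.basis Finset.univ a k
      = C (∏ r ∈ Finset.univ.erase k, (a k - a r)⁻¹)
        * Lagrange.nodal (Finset.univ.erase k) a := by
  simp only [Lagrange.basis, Lagrange.basisDivisor, Lagrange.nodal]
  rw [Finset.prod_mul_distrib, map_prod]

lemma deriv_kappa (a κ : Fin n → ℂ) (k : Fin n) (j : ℕ) :
    deriv (fun t : ℂ =>
        (Lagrange.interpolate Finset.univ a (Function.update κ k t)).coeff j) (κ k)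
      = (Lagrange.basis Finset.univ a k).coeff j := by
  have hfun : (fun t : ℂ =>
      (Lagrange.interpolate Finset.univ a (Function.update κ k t)).coeff j)
      = fun t => t * (Lagrange.basis Finset.univ a k).coeff j
          + ∑ r ∈ Finset.univ.erase k, κ r * (Lagrange.basis Finset.univ a r).coeff j := by
    funext t
    rw [Lagrange.interpolate_apply, finset_sum_coeff,
      ← Finset.add_sum_erase _ _ (Finset.mem_univ k), Function.update_self, coeff_C_mul]
    congr 1
    refine Finset.sum_congr rfl fun r hr => ?_
    rw [Function.update_of_ne (Finset.ne_of_mem_erase hr), coeff_C_mul]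
  rw [hfun]
  simpa using (((hasDerivAt_id (κ k)).mul_const
    ((Lagrange.basis Finset.univ a k).coeff j)).add_const _).deriv

lemma deriv_node (a κ : Fin n → ℂ) (ha : Function.Injective a) (k : Fin n) :
    ∃ c : ℂ, ∀ i : ℕ,
      deriv (fun t : ℂ =>
        (Lagrange.interpolate Finset.univ (Function.update a k t) κ).coeff i) (a k)
      = c * (Lagrange.nodal (Finset.univ.erase k) a).coeff i := by
  set w : ℂ[X] := Lagrange.nodal (Finset.univ.erase k) a with hw
  set P0 : ℂ[X] := Lagrange.interpolate (Finset.univ.erase k) a κ with hP0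
  set g : ℂ → ℂ := fun t => (κ k - P0.eval t) / w.eval t with hg
  set S : Set ℂ := a '' {r | r ≠ k} with hS
  have haInj : Set.InjOn a (Finset.univ.erase k : Finset (Fin n)) := ha.injOn
  have hSfin : S.Finite := (Set.finite_range a).subset (Set.image_subset_range _ _)
  have hUopen : IsOpen Sᶜ := hSfin.isClosed.isOpen_compl
  have hak : a k ∈ Sᶜ := by
    rintro ⟨r, hr, hra⟩
    exact hr (ha hra)
  have hmem : Sᶜ ∈ nhds (a k) := hUopen.mem_nhds hak
  have hwne : ∀ t ∈ Sᶜ, w.eval t ≠ 0 := by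
    intro t ht
    rw [hw, Lagrange.eval_nodal]
    refine Finset.prod_ne_zero_iff.mpr fun r hr => sub_ne_zero_of_ne fun h => ?_
    exact ht ⟨r, Finset.ne_of_mem_erase hr, h.symm⟩
  have hwk : w.eval (a k) ≠ 0 := hwne _ hak
  have key : ∀ t ∈ Sᶜ, Lagrange.interpolate Finset.univ (Function.update a k t) κ
      = C (g t) * w + P0 := by
    intro t ht
    have htne : ∀ r : Fin n, r ≠ k → t ≠ a r := fun r hr h => ht ⟨r, hr, h.symm⟩
    have hwt : w.eval t ≠ 0 := hwne t ht
    have hinj : Function.Injective (Function.update a k t) := by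
      intro x y hxy
      by_cases hx : x = k <;> by_cases hy : y = k
      · rw [hx, hy]
      · rw [hx, Function.update_self, Function.update_of_ne hy] at hxy
        exact absurd hxy (htne y hy)
      · rw [hy, Function.update_of_ne hx, Function.update_self] at hxy
        exact absurd hxy.symm (htne x hx)
      · rw [Function.update_of_ne hx, Function.update_of_ne hy] at hxy
        exact ha hxy
    have hcard : ((Finset.univ.erase k).card : WithBot ℕ)
        < ((Finset.univ : Finset (Fin n)).card : WithBot ℕ) := by
      rw [Finset.card_erase_of_mem (Finset.mem_univ k), Finset.card_univ, Fintype.card_fin]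
      exact_mod_cast Nat.sub_lt k.pos Nat.one_pos
    have hdeg : (C (g t) * w + P0).degree < ((Finset.univ : Finset (Fin n)).card : WithBot ℕ) := by
      refine lt_of_le_of_lt (degree_add_le _ _) (max_lt ?_ ?_)
      · calc (C (g t) * w).degree ≤ (C (g t)).degree + w.degree := degree_mul_le _ _
          _ ≤ 0 + w.degree := by gcongr; exact degree_C_le
          _ = ((Finset.univ.erase k).card : WithBot ℕ) := by
              rw [zero_add, hw, Lagrange.degree_nodal]
          _ < _ := hcard
      · exact lt_trans (Lagrange.degree_interpolate_lt κ haInj) hcard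
    refine (Lagrange.eq_interpolate_of_eval_eq κ hinj.injOn hdeg fun s' _ => ?_).symm
    rcases eq_or_ne s' k with rfl | hs'
    · rw [Function.update_self, eval_add, eval_mul, eval_C, hg]
      rw [div_mul_cancel₀ _ hwt]
      ring
    · rw [Function.update_of_ne hs', eval_add, eval_mul, eval_C]
      have hwz : w.eval (a s') = 0 := by
        rw [hw, Lagrange.eval_nodal]
        exact Finset.prod_eq_zero (Finset.mem_erase.mpr ⟨hs', Finset.mem_univ s'⟩) (sub_self _)
      rw [hwz, mul_zero, zero_add, hP0]
      exact Lagrange.eval_interpolate_at_node κ haInj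
        (Finset.mem_erase.mpr ⟨hs', Finset.mem_univ s'⟩)
  obtain ⟨c, hgd⟩ : ∃ c, HasDerivAt g c (a k) :=
    ⟨_, (((P0.hasDerivAt (a k)).const_sub (κ k)).div (w.hasDerivAt (a k)) hwk)⟩
  refine ⟨c, fun i => ?_⟩
  have hev : (fun t => (Lagrange.interpolate Finset.univ (Function.update a k t) κ).coeff i)
      =ᶠ[nhds (a k)] fun t => g t * w.coeff i + P0.coeff i := by
    filter_upwards [hmem] with t ht
    rw [key t ht, coeff_add, coeff_C_mul]
  rw [hev.deriv_eq]
  exact ((hgd.mul_const (w.coeff i)).add_const (P0.coeff i)).deriv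

end LagrangePoissonAux

/-- Proposition `main`: the coefficients of the Lagrange interpolation
polynomial, viewed as functions of the nodes `a` and values `κ`, pairwise Poisson-commute
with respect to the canonical Poisson bracket `{a_r, κ_s} = δ_{rs}`:
`{F_i, F_j} = Σ_k (∂F_i/∂a_k ∂F_j/∂κ_k − ∂F_j/∂a_k ∂F_i/∂κ_k) = 0`. -/
theorem lagrange_coeffs_poisson_commute (n : ℕ) (a κ : Fin n → ℂ)
    (ha : Function.Injective a) (i j : ℕ) :
    ∑ k : Fin n,
      (deriv (fun t : ℂ =>
          (Lagrange.interpolate Finset.univ (Function.update a k t) κ).coeff i) (a k)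
        * deriv (fun t : ℂ =>
          (Lagrange.interpolate Finset.univ a (Function.update κ k t)).coeff j) (κ k)
       - deriv (fun t : ℂ =>
          (Lagrange.interpolate Finset.univ (Function.update a k t) κ).coeff j) (a k)
        * deriv (fun t : ℂ =>
          (Lagrange.interpolate Finset.univ a (Function.update κ k t)).coeff i) (κ k))
    = 0 := by
  refine Finset.sum_eq_zero fun k _ => ?_
  obtain ⟨c, hc⟩ := LagrangePoissonAux.deriv_node a κ ha k
  rw [hc i, hc j, LagrangePoissonAux.deriv_kappa a κ k i,
    LagrangePoissonAux.deriv_kappa a κ k j, LagrangePoissonAux.basis_eq a k,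
    Polynomial.coeff_C_mul, Polynomial.coeff_C_mul]
  ring
end

section
/- For n = 3 nodes (a_1,a_3,a_6) with values (κ_1,κ_3,κ_6), denote D = (a_1−a_3)(a_1−a_6)(a_3−a_6) and define F_0 = [a_1 a_6 (a_6−a_1) κ_3 + a_3^2 (a_6 κ_1 − a_1 κ_6) + a_3 (a_1^2 κ_6 − a_6^2 κ_1)]/D, F_1 = [a_6^2(κ_3−κ_1) + a_3^2(κ_1−κ_6) + a_1^2(κ_6−κ_3)]/D, F_2 = [a_6(κ_3−κ_1) + a_3(κ_1−κ_6) + a_1(κ_6−κ_3)]/D. Then {F_0,F_1} = {F_0,F_2} = {F_1,F_2} = 0 with respect to the canonical Poisson bracket {a_i,κ_i} = 1. -/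
noncomputable section

/-- Constant Lagrange coefficient for three nodes `(a₁,a₃,a₆)`, values `(κ₁,κ₃,κ₆)`. -/
def F0g3 (a1 a3 a6 k1 k3 k6 : ℂ) : ℂ :=
  (a1 * a6 * (a6 - a1) * k3 + a3 ^ 2 * (a6 * k1 - a1 * k6) + a3 * (a1 ^ 2 * k6 - a6 ^ 2 * k1)) /
    ((a1 - a3) * (a1 - a6) * (a3 - a6))

/-- Linear Lagrange coefficient. -/
def F1g3 (a1 a3 a6 k1 k3 k6 : ℂ) : ℂ :=
  (a6 ^ 2 * (k3 - k1) + a3 ^ 2 * (k1 - k6) + a1 ^ 2 * (k6 - k3)) /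
    ((a1 - a3) * (a1 - a6) * (a3 - a6))

/-- Quadratic Lagrange coefficient. -/
def F2g3 (a1 a3 a6 k1 k3 k6 : ℂ) : ℂ :=
  (a6 * (k3 - k1) + a3 * (k1 - k6) + a1 * (k6 - k3)) /
    ((a1 - a3) * (a1 - a6) * (a3 - a6))

/-- Canonical Poisson bracket on functions of `(a₁,a₃,a₆,κ₁,κ₃,κ₆)` with `{a_i,κ_i} = 1`. -/
def pbG3 (f g : ℂ → ℂ → ℂ → ℂ → ℂ → ℂ → ℂ) (a1 a3 a6 k1 k3 k6 : ℂ) : ℂ :=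
    deriv (fun t => f t a3 a6 k1 k3 k6) a1 * deriv (fun t => g a1 a3 a6 t k3 k6) k1
  - deriv (fun t => g t a3 a6 k1 k3 k6) a1 * deriv (fun t => f a1 a3 a6 t k3 k6) k1
  + deriv (fun t => f a1 t a6 k1 k3 k6) a3 * deriv (fun t => g a1 a3 a6 k1 t k6) k3
  - deriv (fun t => g a1 t a6 k1 k3 k6) a3 * deriv (fun t => f a1 a3 a6 k1 t k6) k3
  + deriv (fun t => f a1 a3 t k1 k3 k6) a6 * deriv (fun t => g a1 a3 a6 k1 k3 t) k6
  - deriv (fun t => g a1 a3 t k1 k3 k6) a6 * deriv (fun t => f a1 a3 a6 k1 k3 t) k6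

lemma DQQ (A B C P Q R x : ℂ) (h : P * x ^ 2 + Q * x + R ≠ 0) :
    deriv (fun t => (A * t ^ 2 + B * t + C) / (P * t ^ 2 + Q * t + R)) x =
      ((2 * A * x + B) * (P * x ^ 2 + Q * x + R)
        - (A * x ^ 2 + B * x + C) * (2 * P * x + Q)) / (P * x ^ 2 + Q * x + R) ^ 2 := by
  have hn : HasDerivAt (fun t : ℂ => A * t ^ 2 + B * t + C) (2 * A * x + B) x := by
    have h1 := ((hasDerivAt_pow 2 x).const_mul A).add
      (((hasDerivAt_id x).const_mul B).add_const C)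
    convert h1 using 1
    · rfl
    · rfl
    · funext t; simp only [Pi.add_apply, id]; ring
    · push_cast; ring
  have hd : HasDerivAt (fun t : ℂ => P * t ^ 2 + Q * t + R) (2 * P * x + Q) x := by
    have h1 := ((hasDerivAt_pow 2 x).const_mul P).add
      (((hasDerivAt_id x).const_mul Q).add_const R)
    convert h1 using 1
    · rfl
    · rfl
    · funext t; simp only [Pi.add_apply, id]; ring
    · push_cast; ring
  have := (hn.div hd h).deriv
  convert this using 2 <;> rfl

lemma DLIN (B C R x : ℂ) (h : R ≠ 0) :
    deriv (fun t => (B * t + C) / R) x = B / R := by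
  have hn : HasDerivAt (fun t : ℂ => (B * t + C) / R) (B / R) x := by
    have h1 := (((hasDerivAt_id x).const_mul B).add_const C).div_const R
    convert h1 using 1
    · rfl
    · rfl
    · rfl
    ring
  exact hn.deriv

/-- for three pairwise distinct nodes, the Lagrange coefficients
`F₀, F₁, F₂` pairwise Poisson-commute. -/
theorem genus3_integrals_commute (a1 a3 a6 k1 k3 k6 : ℂ)
    (h13 : a1 ≠ a3) (h16 : a1 ≠ a6) (h36 : a3 ≠ a6) :
    pbG3 F0g3 F1g3 a1 a3 a6 k1 k3 k6 = 0 ∧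
    pbG3 F0g3 F2g3 a1 a3 a6 k1 k3 k6 = 0 ∧
    pbG3 F1g3 F2g3 a1 a3 a6 k1 k3 k6 = 0 := by
  have hD : (a1 - a3) * (a1 - a6) * (a3 - a6) ≠ 0 :=
    mul_ne_zero (mul_ne_zero (sub_ne_zero.mpr h13) (sub_ne_zero.mpr h16)) (sub_ne_zero.mpr h36)

  have hda1 : (a3 - a6) * a1 ^ 2 + (-(a3-a6)*(a3+a6)) * a1 + ((a3-a6)*(a3*a6)) ≠ 0 := by
    intro h0; exact hD (by linear_combination h0)

  have hda3 : (-(a1-a6)) * a3 ^ 2 + ((a1-a6)*(a1+a6)) * a3 + (-(a1-a6)*(a1*a6)) ≠ 0 := by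
    intro h0; exact hD (by linear_combination h0)

  have hda6 : (a1 - a3) * a6 ^ 2 + (-(a1-a3)*(a1+a3)) * a6 + ((a1-a3)*(a1*a3)) ≠ 0 := by
    intro h0; exact hD (by linear_combination h0)

  have d0a1 : deriv (fun t => F0g3 t a3 a6 k1 k3 k6) a1 =
      ((2 * (a3*k6 - a6*k3) * a1 + (a6^2*k3 - a3^2*k6)) * ((a1 - a3) * (a1 - a6) * (a3 - a6))
        - ((a3*k6 - a6*k3) * a1 ^ 2 + (a6^2*k3 - a3^2*k6) * a1 + (a3^2*a6*k1 - a3*a6^2*k1)) * (2 * (a3 - a6) * a1 + (-(a3-a6)*(a3+a6)))) / ((a1 - a3) * (a1 - a6) * (a3 - a6)) ^ 2 := by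
    rw [show (fun t => F0g3 t a3 a6 k1 k3 k6) = (fun t => ((a3*k6 - a6*k3) * t ^ 2 + (a6^2*k3 - a3^2*k6) * t + (a3^2*a6*k1 - a3*a6^2*k1)) / ((a3 - a6) * t ^ 2 + (-(a3-a6)*(a3+a6)) * t + ((a3-a6)*(a3*a6)))) from funext fun t => by unfold F0g3; ring,
      DQQ _ _ _ _ _ _ _ hda1,
      show (a3 - a6) * a1 ^ 2 + (-(a3-a6)*(a3+a6)) * a1 + ((a3-a6)*(a3*a6)) = (a1 - a3) * (a1 - a6) * (a3 - a6) from by ring]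

  have d1a1 : deriv (fun t => F1g3 t a3 a6 k1 k3 k6) a1 =
      ((2 * (k6 - k3) * a1 + 0) * ((a1 - a3) * (a1 - a6) * (a3 - a6))
        - ((k6 - k3) * a1 ^ 2 + 0 * a1 + (a6^2*(k3-k1) + a3^2*(k1-k6))) * (2 * (a3 - a6) * a1 + (-(a3-a6)*(a3+a6)))) / ((a1 - a3) * (a1 - a6) * (a3 - a6)) ^ 2 := by
    rw [show (fun t => F1g3 t a3 a6 k1 k3 k6) = (fun t => ((k6 - k3) * t ^ 2 + 0 * t + (a6^2*(k3-k1) + a3^2*(k1-k6))) / ((a3 - a6) * t ^ 2 + (-(a3-a6)*(a3+a6)) * t + ((a3-a6)*(a3*a6)))) from funext fun t => by unfold F1g3; ring,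
      DQQ _ _ _ _ _ _ _ hda1,
      show (a3 - a6) * a1 ^ 2 + (-(a3-a6)*(a3+a6)) * a1 + ((a3-a6)*(a3*a6)) = (a1 - a3) * (a1 - a6) * (a3 - a6) from by ring]

  have d2a1 : deriv (fun t => F2g3 t a3 a6 k1 k3 k6) a1 =
      ((2 * 0 * a1 + (k6 - k3)) * ((a1 - a3) * (a1 - a6) * (a3 - a6))
        - (0 * a1 ^ 2 + (k6 - k3) * a1 + (a6*(k3-k1) + a3*(k1-k6))) * (2 * (a3 - a6) * a1 + (-(a3-a6)*(a3+a6)))) / ((a1 - a3) * (a1 - a6) * (a3 - a6)) ^ 2 := by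
    rw [show (fun t => F2g3 t a3 a6 k1 k3 k6) = (fun t => (0 * t ^ 2 + (k6 - k3) * t + (a6*(k3-k1) + a3*(k1-k6))) / ((a3 - a6) * t ^ 2 + (-(a3-a6)*(a3+a6)) * t + ((a3-a6)*(a3*a6)))) from funext fun t => by unfold F2g3; ring,
      DQQ _ _ _ _ _ _ _ hda1,
      show (a3 - a6) * a1 ^ 2 + (-(a3-a6)*(a3+a6)) * a1 + ((a3-a6)*(a3*a6)) = (a1 - a3) * (a1 - a6) * (a3 - a6) from by ring]

  have d0a3 : deriv (fun t => F0g3 a1 t a6 k1 k3 k6) a3 =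
      ((2 * (a6*k1 - a1*k6) * a3 + (a1^2*k6 - a6^2*k1)) * ((a1 - a3) * (a1 - a6) * (a3 - a6))
        - ((a6*k1 - a1*k6) * a3 ^ 2 + (a1^2*k6 - a6^2*k1) * a3 + (a1*a6*(a6-a1)*k3)) * (2 * (-(a1-a6)) * a3 + ((a1-a6)*(a1+a6)))) / ((a1 - a3) * (a1 - a6) * (a3 - a6)) ^ 2 := by
    rw [show (fun t => F0g3 a1 t a6 k1 k3 k6) = (fun t => ((a6*k1 - a1*k6) * t ^ 2 + (a1^2*k6 - a6^2*k1) * t + (a1*a6*(a6-a1)*k3)) / ((-(a1-a6)) * t ^ 2 + ((a1-a6)*(a1+a6)) * t + (-(a1-a6)*(a1*a6)))) from funext fun t => by unfold F0g3; ring,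
      DQQ _ _ _ _ _ _ _ hda3,
      show (-(a1-a6)) * a3 ^ 2 + ((a1-a6)*(a1+a6)) * a3 + (-(a1-a6)*(a1*a6)) = (a1 - a3) * (a1 - a6) * (a3 - a6) from by ring]

  have d1a3 : deriv (fun t => F1g3 a1 t a6 k1 k3 k6) a3 =
      ((2 * (k1 - k6) * a3 + 0) * ((a1 - a3) * (a1 - a6) * (a3 - a6))
        - ((k1 - k6) * a3 ^ 2 + 0 * a3 + (a6^2*(k3-k1) + a1^2*(k6-k3))) * (2 * (-(a1-a6)) * a3 + ((a1-a6)*(a1+a6)))) / ((a1 - a3) * (a1 - a6) * (a3 - a6)) ^ 2 := by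
    rw [show (fun t => F1g3 a1 t a6 k1 k3 k6) = (fun t => ((k1 - k6) * t ^ 2 + 0 * t + (a6^2*(k3-k1) + a1^2*(k6-k3))) / ((-(a1-a6)) * t ^ 2 + ((a1-a6)*(a1+a6)) * t + (-(a1-a6)*(a1*a6)))) from funext fun t => by unfold F1g3; ring,
      DQQ _ _ _ _ _ _ _ hda3,
      show (-(a1-a6)) * a3 ^ 2 + ((a1-a6)*(a1+a6)) * a3 + (-(a1-a6)*(a1*a6)) = (a1 - a3) * (a1 - a6) * (a3 - a6) from by ring]

  have d2a3 : deriv (fun t => F2g3 a1 t a6 k1 k3 k6) a3 =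
      ((2 * 0 * a3 + (k1 - k6)) * ((a1 - a3) * (a1 - a6) * (a3 - a6))
        - (0 * a3 ^ 2 + (k1 - k6) * a3 + (a6*(k3-k1) + a1*(k6-k3))) * (2 * (-(a1-a6)) * a3 + ((a1-a6)*(a1+a6)))) / ((a1 - a3) * (a1 - a6) * (a3 - a6)) ^ 2 := by
    rw [show (fun t => F2g3 a1 t a6 k1 k3 k6) = (fun t => (0 * t ^ 2 + (k1 - k6) * t + (a6*(k3-k1) + a1*(k6-k3))) / ((-(a1-a6)) * t ^ 2 + ((a1-a6)*(a1+a6)) * t + (-(a1-a6)*(a1*a6)))) from funext fun t => by unfold F2g3; ring,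
      DQQ _ _ _ _ _ _ _ hda3,
      show (-(a1-a6)) * a3 ^ 2 + ((a1-a6)*(a1+a6)) * a3 + (-(a1-a6)*(a1*a6)) = (a1 - a3) * (a1 - a6) * (a3 - a6) from by ring]

  have d0a6 : deriv (fun t => F0g3 a1 a3 t k1 k3 k6) a6 =
      ((2 * (a1*k3 - a3*k1) * a6 + (a3^2*k1 - a1^2*k3)) * ((a1 - a3) * (a1 - a6) * (a3 - a6))
        - ((a1*k3 - a3*k1) * a6 ^ 2 + (a3^2*k1 - a1^2*k3) * a6 + (a1*a3*k6*(a1-a3))) * (2 * (a1 - a3) * a6 + (-(a1-a3)*(a1+a3)))) / ((a1 - a3) * (a1 - a6) * (a3 - a6)) ^ 2 := by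
    rw [show (fun t => F0g3 a1 a3 t k1 k3 k6) = (fun t => ((a1*k3 - a3*k1) * t ^ 2 + (a3^2*k1 - a1^2*k3) * t + (a1*a3*k6*(a1-a3))) / ((a1 - a3) * t ^ 2 + (-(a1-a3)*(a1+a3)) * t + ((a1-a3)*(a1*a3)))) from funext fun t => by unfold F0g3; ring,
      DQQ _ _ _ _ _ _ _ hda6,
      show (a1 - a3) * a6 ^ 2 + (-(a1-a3)*(a1+a3)) * a6 + ((a1-a3)*(a1*a3)) = (a1 - a3) * (a1 - a6) * (a3 - a6) from by ring]

  have d1a6 : deriv (fun t => F1g3 a1 a3 t k1 k3 k6) a6 =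
      ((2 * (k3 - k1) * a6 + 0) * ((a1 - a3) * (a1 - a6) * (a3 - a6))
        - ((k3 - k1) * a6 ^ 2 + 0 * a6 + (a3^2*(k1-k6) + a1^2*(k6-k3))) * (2 * (a1 - a3) * a6 + (-(a1-a3)*(a1+a3)))) / ((a1 - a3) * (a1 - a6) * (a3 - a6)) ^ 2 := by
    rw [show (fun t => F1g3 a1 a3 t k1 k3 k6) = (fun t => ((k3 - k1) * t ^ 2 + 0 * t + (a3^2*(k1-k6) + a1^2*(k6-k3))) / ((a1 - a3) * t ^ 2 + (-(a1-a3)*(a1+a3)) * t + ((a1-a3)*(a1*a3)))) from funext fun t => by unfold F1g3; ring,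
      DQQ _ _ _ _ _ _ _ hda6,
      show (a1 - a3) * a6 ^ 2 + (-(a1-a3)*(a1+a3)) * a6 + ((a1-a3)*(a1*a3)) = (a1 - a3) * (a1 - a6) * (a3 - a6) from by ring]

  have d2a6 : deriv (fun t => F2g3 a1 a3 t k1 k3 k6) a6 =
      ((2 * 0 * a6 + (k3 - k1)) * ((a1 - a3) * (a1 - a6) * (a3 - a6))
        - (0 * a6 ^ 2 + (k3 - k1) * a6 + (a3*(k1-k6) + a1*(k6-k3))) * (2 * (a1 - a3) * a6 + (-(a1-a3)*(a1+a3)))) / ((a1 - a3) * (a1 - a6) * (a3 - a6)) ^ 2 := by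
    rw [show (fun t => F2g3 a1 a3 t k1 k3 k6) = (fun t => (0 * t ^ 2 + (k3 - k1) * t + (a3*(k1-k6) + a1*(k6-k3))) / ((a1 - a3) * t ^ 2 + (-(a1-a3)*(a1+a3)) * t + ((a1-a3)*(a1*a3)))) from funext fun t => by unfold F2g3; ring,
      DQQ _ _ _ _ _ _ _ hda6,
      show (a1 - a3) * a6 ^ 2 + (-(a1-a3)*(a1+a3)) * a6 + ((a1-a3)*(a1*a3)) = (a1 - a3) * (a1 - a6) * (a3 - a6) from by ring]

  have d0k1 : deriv (fun t => F0g3 a1 a3 a6 t k3 k6) k1 = (a3^2*a6 - a3*a6^2) / ((a1 - a3) * (a1 - a6) * (a3 - a6)) := by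
    rw [show (fun t => F0g3 a1 a3 a6 t k3 k6) = (fun t => ((a3^2*a6 - a3*a6^2) * t + (a1*a6*(a6-a1)*k3 - a3^2*a1*k6 + a3*a1^2*k6)) / ((a1 - a3) * (a1 - a6) * (a3 - a6))) from funext fun t => by unfold F0g3; ring]
    exact DLIN _ _ _ _ hD

  have d0k3 : deriv (fun t => F0g3 a1 a3 a6 k1 t k6) k3 = (a1*a6*(a6-a1)) / ((a1 - a3) * (a1 - a6) * (a3 - a6)) := by
    rw [show (fun t => F0g3 a1 a3 a6 k1 t k6) = (fun t => ((a1*a6*(a6-a1)) * t + (a3^2*(a6*k1-a1*k6) + a3*(a1^2*k6-a6^2*k1))) / ((a1 - a3) * (a1 - a6) * (a3 - a6))) from funext fun t => by unfold F0g3; ring]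
    exact DLIN _ _ _ _ hD

  have d0k6 : deriv (fun t => F0g3 a1 a3 a6 k1 k3 t) k6 = (a3*a1^2 - a3^2*a1) / ((a1 - a3) * (a1 - a6) * (a3 - a6)) := by
    rw [show (fun t => F0g3 a1 a3 a6 k1 k3 t) = (fun t => ((a3*a1^2 - a3^2*a1) * t + (a1*a6*(a6-a1)*k3 + a3^2*a6*k1 - a3*a6^2*k1)) / ((a1 - a3) * (a1 - a6) * (a3 - a6))) from funext fun t => by unfold F0g3; ring]
    exact DLIN _ _ _ _ hD

  have d1k1 : deriv (fun t => F1g3 a1 a3 a6 t k3 k6) k1 = (a3^2 - a6^2) / ((a1 - a3) * (a1 - a6) * (a3 - a6)) := by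
    rw [show (fun t => F1g3 a1 a3 a6 t k3 k6) = (fun t => ((a3^2 - a6^2) * t + (a6^2*k3 - a3^2*k6 + a1^2*(k6-k3))) / ((a1 - a3) * (a1 - a6) * (a3 - a6))) from funext fun t => by unfold F1g3; ring]
    exact DLIN _ _ _ _ hD

  have d1k3 : deriv (fun t => F1g3 a1 a3 a6 k1 t k6) k3 = (a6^2 - a1^2) / ((a1 - a3) * (a1 - a6) * (a3 - a6)) := by
    rw [show (fun t => F1g3 a1 a3 a6 k1 t k6) = (fun t => ((a6^2 - a1^2) * t + (-a6^2*k1 + a3^2*(k1-k6) + a1^2*k6)) / ((a1 - a3) * (a1 - a6) * (a3 - a6))) from funext fun t => by unfold F1g3; ring]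
    exact DLIN _ _ _ _ hD

  have d1k6 : deriv (fun t => F1g3 a1 a3 a6 k1 k3 t) k6 = (a1^2 - a3^2) / ((a1 - a3) * (a1 - a6) * (a3 - a6)) := by
    rw [show (fun t => F1g3 a1 a3 a6 k1 k3 t) = (fun t => ((a1^2 - a3^2) * t + (a6^2*(k3-k1) + a3^2*k1 - a1^2*k3)) / ((a1 - a3) * (a1 - a6) * (a3 - a6))) from funext fun t => by unfold F1g3; ring]
    exact DLIN _ _ _ _ hD

  have d2k1 : deriv (fun t => F2g3 a1 a3 a6 t k3 k6) k1 = (a3 - a6) / ((a1 - a3) * (a1 - a6) * (a3 - a6)) := by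
    rw [show (fun t => F2g3 a1 a3 a6 t k3 k6) = (fun t => ((a3 - a6) * t + (a6*k3 - a3*k6 + a1*(k6-k3))) / ((a1 - a3) * (a1 - a6) * (a3 - a6))) from funext fun t => by unfold F2g3; ring]
    exact DLIN _ _ _ _ hD

  have d2k3 : deriv (fun t => F2g3 a1 a3 a6 k1 t k6) k3 = (a6 - a1) / ((a1 - a3) * (a1 - a6) * (a3 - a6)) := by
    rw [show (fun t => F2g3 a1 a3 a6 k1 t k6) = (fun t => ((a6 - a1) * t + (-a6*k1 + a3*(k1-k6) + a1*k6)) / ((a1 - a3) * (a1 - a6) * (a3 - a6))) from funext fun t => by unfold F2g3; ring]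
    exact DLIN _ _ _ _ hD

  have d2k6 : deriv (fun t => F2g3 a1 a3 a6 k1 k3 t) k6 = (a1 - a3) / ((a1 - a3) * (a1 - a6) * (a3 - a6)) := by
    rw [show (fun t => F2g3 a1 a3 a6 k1 k3 t) = (fun t => ((a1 - a3) * t + (a6*(k3-k1) + a3*k1 - a1*k3)) / ((a1 - a3) * (a1 - a6) * (a3 - a6))) from funext fun t => by unfold F2g3; ring]
    exact DLIN _ _ _ _ hD

  refine ⟨?_, ?_, ?_⟩ <;> simp only [pbG3]
  · rw [d0a1, d0a3, d0a6, d0k1, d0k3, d0k6, d1a1, d1a3, d1a6, d1k1, d1k3, d1k6]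
    rw [div_mul_div_comm, div_mul_div_comm, div_mul_div_comm, div_mul_div_comm,
      div_mul_div_comm, div_mul_div_comm, div_sub_div_same, ← add_div,
      div_sub_div_same, ← add_div, div_sub_div_same, div_eq_zero_iff]
    left
    ring
  · rw [d0a1, d0a3, d0a6, d0k1, d0k3, d0k6, d2a1, d2a3, d2a6, d2k1, d2k3, d2k6]
    rw [div_mul_div_comm, div_mul_div_comm, div_mul_div_comm, div_mul_div_comm,
      div_mul_div_comm, div_mul_div_comm, div_sub_div_same, ← add_div,
      div_sub_div_same, ← add_div, div_sub_div_same, div_eq_zero_iff]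
    left
    ring
  · rw [d1a1, d1a3, d1a6, d1k1, d1k3, d1k6, d2a1, d2a3, d2a6, d2k1, d2k3, d2k6]
    rw [div_mul_div_comm, div_mul_div_comm, div_mul_div_comm, div_mul_div_comm,
      div_mul_div_comm, div_mul_div_comm, div_sub_div_same, ← add_div,
      div_sub_div_same, ← add_div, div_sub_div_same, div_eq_zero_iff]
    left
    ring
end
end

section
/- For a solution of the canonical Hamiltonian system with the genus-3 reduced Hamiltonian H = F_1^2 + 2F_0F_2, the following relation holds along the flow: ȧ_1 + ȧ_3 + ȧ_6 = 2·[a_6(κ_3−κ_1) + a_3(κ_1−κ_6) + a_1(κ_6−κ_3)] / [(a_1−a_3)(a_1−a_6)(a_3−a_6)], i.e. ∂H/∂κ_1 + ∂H/∂κ_3 + ∂H/∂κ_6 = 2F_2. -/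
set_option maxHeartbeats 1000000


noncomputable section

/-- The genus-3 reduced Hamiltonian `H = F₁² + 2F₀F₂`. -/
def Hg3 (a1 a3 a6 k1 k3 k6 : ℂ) : ℂ :=
  F1g3 a1 a3 a6 k1 k3 k6 ^ 2 + 2 * F0g3 a1 a3 a6 k1 k3 k6 * F2g3 a1 a3 a6 k1 k3 k6

lemma comb (x y z d : ℂ) :
    (x / d) ^ 2 + 2 * (y / d) * (z / d) = (x ^ 2 + 2 * (y * z)) / d ^ 2 := by
  rcases eq_or_ne d 0 with h | h
  · simp [h]
  · field_simp

lemma quad_deriv (p0 q0 p1 q1 p2 q2 d k : ℂ) :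
    deriv (fun t : ℂ => ((p1 * t + q1) ^ 2 + 2 * ((p0 * t + q0) * (p2 * t + q2))) / d) k
    = (2 * (p1 * k + q1) * p1 + 2 * (p0 * (p2 * k + q2) + (p0 * k + q0) * p2)) / d := by
  have h1 : HasDerivAt (fun t : ℂ => p1 * t + q1) p1 k := by
    simpa using ((hasDerivAt_id k).const_mul p1).add_const q1
  have h0 : HasDerivAt (fun t : ℂ => p0 * t + q0) p0 k := by
    simpa using ((hasDerivAt_id k).const_mul p0).add_const q0
  have h2 : HasDerivAt (fun t : ℂ => p2 * t + q2) p2 k := by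
    simpa using ((hasDerivAt_id k).const_mul p2).add_const q2
  have H := (((h1.pow 2).add ((h0.mul h2).const_mul 2)).div_const d).deriv
  exact H.trans (by ring)

/-- `∂H/∂κ₁ + ∂H/∂κ₃ + ∂H/∂κ₆ = 2F₂`, i.e. along the canonical flow
`ȧ₁ + ȧ₃ + ȧ₆ = 2[a₆(κ₃−κ₁)+a₃(κ₁−κ₆)+a₁(κ₆−κ₃)]/D`. -/
theorem genus3_sum_of_velocities (a1 a3 a6 k1 k3 k6 : ℂ)
    (h13 : a1 ≠ a3) (h16 : a1 ≠ a6) (h36 : a3 ≠ a6) :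
    deriv (fun t => Hg3 a1 a3 a6 t k3 k6) k1
      + deriv (fun t => Hg3 a1 a3 a6 k1 t k6) k3
      + deriv (fun t => Hg3 a1 a3 a6 k1 k3 t) k6
    = 2 * (a6 * (k3 - k1) + a3 * (k1 - k6) + a1 * (k6 - k3)) /
        ((a1 - a3) * (a1 - a6) * (a3 - a6)) := by
  have hd13 : a1 - a3 ≠ 0 := sub_ne_zero.mpr h13
  have hd16 : a1 - a6 ≠ 0 := sub_ne_zero.mpr h16
  have hd36 : a3 - a6 ≠ 0 := sub_ne_zero.mpr h36
  have e1 : (fun t => Hg3 a1 a3 a6 t k3 k6)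
      = fun t : ℂ => (((a3 ^ 2 - a6 ^ 2) * t
          + (a6 ^ 2 * k3 - a3 ^ 2 * k6 + a1 ^ 2 * (k6 - k3))) ^ 2
        + 2 * (((a3 ^ 2 * a6 - a3 * a6 ^ 2) * t
          + (a1 * a6 * (a6 - a1) * k3 - a3 ^ 2 * a1 * k6 + a3 * a1 ^ 2 * k6))
          * ((a3 - a6) * t + (a6 * k3 - a3 * k6 + a1 * (k6 - k3)))))
          / ((a1 - a3) * (a1 - a6) * (a3 - a6)) ^ 2 := by
    funext t
    simp only [Hg3, F0g3, F1g3, F2g3]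
    rw [comb]
    congr 1
    ring
  have e3 : (fun t => Hg3 a1 a3 a6 k1 t k6)
      = fun t : ℂ => (((a6 ^ 2 - a1 ^ 2) * t
          + (-(a6 ^ 2 * k1) + a3 ^ 2 * (k1 - k6) + a1 ^ 2 * k6)) ^ 2
        + 2 * (((a1 * a6 * (a6 - a1)) * t
          + (a3 ^ 2 * (a6 * k1 - a1 * k6) + a3 * (a1 ^ 2 * k6 - a6 ^ 2 * k1)))
          * ((a6 - a1) * t + (-(a6 * k1) + a3 * (k1 - k6) + a1 * k6))))
          / ((a1 - a3) * (a1 - a6) * (a3 - a6)) ^ 2 := by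
    funext t
    simp only [Hg3, F0g3, F1g3, F2g3]
    rw [comb]
    congr 1
    ring
  have e6 : (fun t => Hg3 a1 a3 a6 k1 k3 t)
      = fun t : ℂ => (((a1 ^ 2 - a3 ^ 2) * t
          + (a6 ^ 2 * (k3 - k1) + a3 ^ 2 * k1 - a1 ^ 2 * k3)) ^ 2
        + 2 * (((a3 * a1 ^ 2 - a3 ^ 2 * a1) * t
          + (a1 * a6 * (a6 - a1) * k3 + a3 ^ 2 * a6 * k1 - a3 * a6 ^ 2 * k1))
          * ((a1 - a3) * t + (a6 * (k3 - k1) + a3 * k1 - a1 * k3))))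
          / ((a1 - a3) * (a1 - a6) * (a3 - a6)) ^ 2 := by
    funext t
    simp only [Hg3, F0g3, F1g3, F2g3]
    rw [comb]
    congr 1
    ring
  rw [e1, e3, e6, quad_deriv, quad_deriv, quad_deriv, ← add_div, ← add_div]
  rw [div_eq_div_iff (pow_ne_zero 2 (mul_ne_zero (mul_ne_zero hd13 hd16) hd36))
    (mul_ne_zero (mul_ne_zero hd13 hd16) hd36)]
  ring
end
end

section
/- Along any solution of the canonical Hamiltonian system for a Hamiltonian H that is a polynomial in the Lagrange coefficients F_0,...,F_{n−1}, each coefficient F_i is a constant of motion: d/dt F_i(a(t),κ(t)) = 0. -/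
open Finset
open Polynomial

namespace LCM17
variable {n : ℕ}

noncomputable def B (n : ℕ) (i : ℕ) (k : Fin n) (A : Fin n → ℂ) : ℂ :=
  (Lagrange.basis Finset.univ A k).coeff i

noncomputable def G (n : ℕ) (i : ℕ) (p : (Fin n → ℂ) × (Fin n → ℂ)) : ℂ :=
  (Lagrange.interpolate Finset.univ p.1 p.2).coeff i

lemma G_eq (i : ℕ) (p : (Fin n → ℂ) × (Fin n → ℂ)) :
    G n i p = ∑ k, p.2 k * B n i k p.1 := by
  simp [G, B, Lagrange.interpolate_apply, Polynomial.finset_sum_coeff, Polynomial.coeff_smul,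
    smul_eq_mul]

lemma B_eq (i : ℕ) (k : Fin n) (A : Fin n → ℂ) :
    B n i k A = (∏ j ∈ Finset.univ.erase k, (A k - A j))⁻¹ *
      (∏ j ∈ Finset.univ.erase k, (X - C (A j))).coeff i := by
  rw [B, Lagrange.basis]
  have : ∀ j ∈ Finset.univ.erase k, Lagrange.basisDivisor (A k) (A j)
      = C ((A k - A j)⁻¹) * (X - C (A j)) := fun j _ => rfl
  rw [Finset.prod_congr rfl this, Finset.prod_mul_distrib, ← map_prod, coeff_C_mul,
    ← Finset.prod_inv_distrib]

lemma B_eq_zero (i : ℕ) (k : Fin n) (A : Fin n → ℂ) (hi : n ≤ i) : B n i k A = 0 := by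
  rw [B]
  apply Polynomial.coeff_eq_zero_of_natDegree_lt
  have hlt : (Lagrange.basis Finset.univ A k).natDegree < n := by
    calc (Lagrange.basis Finset.univ A k).natDegree
      ≤ ∑ j ∈ Finset.univ.erase k, (Lagrange.basisDivisor (A k) (A j)).natDegree :=
        Polynomial.natDegree_prod_le _ _
    _ ≤ ∑ j ∈ Finset.univ.erase k, 1 := by
        apply Finset.sum_le_sum
        intro j _
        rcases eq_or_ne (A k) (A j) with h | h
        · rw [h, Lagrange.natDegree_basisDivisor_self]; norm_num
        · rw [Lagrange.natDegree_basisDivisor_of_ne h]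
    _ < n := by
        have hk : k ∈ (Finset.univ : Finset (Fin n)) := Finset.mem_univ k
        rw [Finset.sum_const, smul_eq_mul, mul_one, Finset.card_erase_of_mem hk,
          Finset.card_univ, Fintype.card_fin]
        have := k.pos
        omega
  exact hlt.trans_le hi

lemma G_eq_zero (i : ℕ) (p : (Fin n → ℂ) × (Fin n → ℂ)) (hi : n ≤ i) : G n i p = 0 := by
  rw [G_eq]
  exact Finset.sum_eq_zero fun k _ => by rw [B_eq_zero i k _ hi, mul_zero]

variable {n : ℕ}

lemma differentiable_apply' (j : Fin n) : Differentiable ℂ fun A : Fin n → ℂ => A j :=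
  differentiable_pi.mp differentiable_id j

lemma differentiable_coeff_prod (s : Finset (Fin n)) :
    ∀ i : ℕ, Differentiable ℂ fun A : Fin n → ℂ => (∏ j ∈ s, (X - C (A j))).coeff i := by
  classical
  induction s using Finset.induction_on with
  | empty => intro i; simp only [Finset.prod_empty]; exact differentiable_const _
  | @insert a s hj ih =>
    intro i
    have key : ∀ A : Fin n → ℂ, (∏ j ∈ insert a s, (X - C (A j))).coeff i
        = (if i = 0 then 0 else (∏ j ∈ s, (X - C (A j))).coeff (i - 1))
          - A a * (∏ j ∈ s, (X - C (A j))).coeff i := by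
      intro A
      rw [Finset.prod_insert hj, sub_mul, coeff_sub, coeff_C_mul]
      congr 1
      cases i with
      | zero => simp
      | succ m => simp [coeff_X_mul]
    simp only [key]
    apply Differentiable.sub
    · split
      · exact differentiable_const _
      · exact ih _
    · exact (differentiable_apply' a).mul (ih i)

lemma differentiable_prod_sub (k : Fin n) (s : Finset (Fin n)) :
    Differentiable ℂ fun A : Fin n → ℂ => ∏ j ∈ s, (A k - A j) := by
  classical
  induction s using Finset.induction_on with
  | empty => simp only [Finset.prod_empty]; exact differentiable_const _
  | @insert a s hj ih =>
    simp only [Finset.prod_insert hj]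
    exact ((differentiable_apply' k).sub (differentiable_apply' a)).mul ih

lemma differentiableAt_B (i : ℕ) (k : Fin n) {A : Fin n → ℂ} (hA : Function.Injective A) :
    DifferentiableAt ℂ (LCM17.B n i k) A := by
  have heq : LCM17.B n i k = fun A : Fin n → ℂ =>
      (∏ j ∈ Finset.univ.erase k, (A k - A j))⁻¹ *
        (∏ j ∈ Finset.univ.erase k, (X - C (A j))).coeff i := by
    funext A; exact B_eq i k A
  rw [heq]
  have h1 : DifferentiableAt ℂ (fun A : Fin n → ℂ => ∏ j ∈ Finset.univ.erase k, (A k - A j)) A :=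
    (differentiable_prod_sub k _) A
  have hne : (∏ j ∈ Finset.univ.erase k, (A k - A j)) ≠ 0 := by
    apply Finset.prod_ne_zero_iff.mpr
    intro j hj
    have : j ≠ k := (Finset.mem_erase.mp hj).1
    exact sub_ne_zero_of_ne fun h => this (hA h.symm)
  exact (h1.inv hne).mul ((differentiable_coeff_prod _ i) A)

lemma differentiableAt_G (i : ℕ) {p : (Fin n → ℂ) × (Fin n → ℂ)}
    (hp : Function.Injective p.1) : DifferentiableAt ℂ (G n i) p := by
  have heq : G n i = fun q : (Fin n → ℂ) × (Fin n → ℂ) => ∑ k, q.2 k * LCM17.B n i k q.1 := by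
    funext q; exact G_eq i q
  rw [heq]
  apply DifferentiableAt.fun_sum
  intro k _
  apply DifferentiableAt.mul
  · exact ((differentiable_apply' k).comp differentiable_snd).differentiableAt
  · exact (differentiableAt_B i k hp).comp p differentiableAt_fst

end LCM17

namespace LCM17

lemma hasDerivAt_mv_eval {g : Fin n → ℂ → ℂ} {g' : Fin n → ℂ} {x : ℂ}
    (hg : ∀ j, HasDerivAt (g j) (g' j) x) (P : MvPolynomial (Fin n) ℂ) :
    HasDerivAt (fun u => MvPolynomial.eval (fun j => g j u) P)
      (∑ j, MvPolynomial.eval (fun j => g j x) (MvPolynomial.pderiv j P) * g' j) x := by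
  induction P using MvPolynomial.induction_on with
  | C a =>
    simp only [MvPolynomial.eval_C, MvPolynomial.pderiv_C, map_zero, zero_mul,
      Finset.sum_const_zero]
    exact hasDerivAt_const x a
  | add p q hp hq =>
    have := hp.add hq
    refine HasDerivAt.congr_deriv (HasDerivAt.congr_of_eventuallyEq this (Filter.Eventually.of_forall fun u => ?_)) (Eq.symm ?_)
    · simp [map_add]
    · rw [← Finset.sum_add_distrib]
      apply Finset.sum_congr rfl
      intro j _
      simp [map_add, add_mul]
  | mul_X p j hp =>
    have key := hp.mul (hg j)
    refine HasDerivAt.congr_deriv (HasDerivAt.congr_of_eventuallyEq key (Filter.Eventually.of_forall fun u => ?_)) (Eq.symm ?_)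
    · simp [map_mul]
    · have : ∀ m : Fin n, MvPolynomial.eval (fun j => g j x) (MvPolynomial.pderiv m (p * MvPolynomial.X j)) * g' m
          = MvPolynomial.eval (fun j => g j x) (MvPolynomial.pderiv m p) * g' m * g j x
            + (if m = j then MvPolynomial.eval (fun j => g j x) p * g' j else 0) := by
        intro m
        rcases eq_or_ne m j with h | h
        · subst h
          simp [MvPolynomial.pderiv_mul, map_add, map_mul, add_mul]
          ring
        · simp [MvPolynomial.pderiv_mul, map_add, map_mul, MvPolynomial.pderiv_X_of_ne (Ne.symm h), h]
          ring
      rw [Finset.sum_congr rfl fun m _ => this m, Finset.sum_add_distrib, Finset.sum_ite_eq' Finset.univ j, ← Finset.sum_mul]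
      simp [mul_comm]
  
end LCM17

namespace LCM17

lemma hasDerivAt_update (A : Fin n → ℂ) (k : Fin n) (x : ℂ) :
    HasDerivAt (fun u : ℂ => Function.update A k u) (Pi.single k 1) x := by
  rw [hasDerivAt_pi]
  intro j
  rcases eq_or_ne j k with h | h
  · subst h
    simp only [Function.update_self, Pi.single_eq_same]
    exact hasDerivAt_id x
  · simp only [Function.update_of_ne h, Pi.single_eq_of_ne h]
    exact hasDerivAt_const x (A j)

lemma hasDerivAt_G_kappa (i : ℕ) (A K : Fin n → ℂ) (k : Fin n) (x : ℂ) :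
    HasDerivAt (fun u => G n i (A, Function.update K k u)) (B n i k A) x := by
  have heq : (fun u => G n i (A, Function.update K k u))
      = fun u => u * B n i k A + ∑ m ∈ Finset.univ.erase k, K m * B n i m A := by
    funext u
    rw [G_eq]
    simp only
    rw [← Finset.add_sum_erase _ _ (Finset.mem_univ k), Function.update_self]
    congr 1
    exact Finset.sum_congr rfl fun m hm => by
      rw [Function.update_of_ne (Finset.mem_erase.mp hm).1]
  rw [heq]
  simpa using ((hasDerivAt_id x).mul_const (B n i k A)).add_const (∑ m ∈ Finset.univ.erase k, K m * B n i m A)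

lemma injective_update_eventually {A : Fin n → ℂ} (hA : Function.Injective A) (k : Fin n) :
    ∀ᶠ u in nhds (A k), Function.Injective (Function.update A k u) := by
  have h1 : ∀ᶠ u in nhds (A k), ∀ j ∈ Finset.univ.erase k, u ≠ A j := by
    rw [Filter.eventually_all_finset]
    intro j hj
    exact eventually_ne_nhds (hA.ne (Finset.mem_erase.mp hj).1.symm)
  filter_upwards [h1] with u hu
  intro x y hxy
  rcases eq_or_ne x k with hx | hx <;> rcases eq_or_ne y k with hy | hy
  · rw [hx, hy]
  · rw [hx, Function.update_self, Function.update_of_ne hy] at hxy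
    exact absurd hxy (hu y (Finset.mem_erase.mpr ⟨hy, Finset.mem_univ y⟩))
  · rw [hy, Function.update_self, Function.update_of_ne hx] at hxy
    exact absurd hxy.symm (hu x (Finset.mem_erase.mpr ⟨hx, Finset.mem_univ x⟩))
  · rw [Function.update_of_ne hx, Function.update_of_ne hy] at hxy
    exact hA hxy

lemma natDegree_interpolate_lt (hn : 0 < n) (v r : Fin n → ℂ) :
    (Lagrange.interpolate Finset.univ v r).natDegree < n := by
  have h : (Lagrange.interpolate Finset.univ v r).natDegree ≤ n - 1 := by
    rw [Polynomial.natDegree_le_iff_coeff_eq_zero]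
    intro N hN
    exact G_eq_zero N (v, r) (by omega)
  omega

lemma natDegree_basis_lt (hn : 0 < n) (v : Fin n → ℂ) (k : Fin n) :
    (Lagrange.basis Finset.univ v k).natDegree < n := by
  have h : (Lagrange.basis Finset.univ v k).natDegree ≤ n - 1 := by
    rw [Polynomial.natDegree_le_iff_coeff_eq_zero]
    intro N hN
    exact B_eq_zero N k v (by omega)
  omega

end LCM17

namespace LCM17

lemma exists_c {A : Fin n → ℂ} (K : Fin n → ℂ) (hA : Function.Injective A) (k : Fin n) :
    ∃ c : ℂ, ∀ i : ℕ,
      HasDerivAt (fun u => G n i (Function.update A k u, K)) (c * B n i k A) (A k) := by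
  classical
  have hn : 0 < n := k.pos
  have hAself : Function.update A k (A k) = A := Function.update_eq_self k A
  have hcurve : ∀ x : ℂ, HasDerivAt (fun u : ℂ => (Function.update A k u, K))
      ((Pi.single k 1 : Fin n → ℂ), (0 : Fin n → ℂ)) x :=
    fun x => (hasDerivAt_update A k x).prodMk (hasDerivAt_const x K)
  have hd : ∀ i, DifferentiableAt ℂ (fun u => G n i (Function.update A k u, K)) (A k) := by
    intro i
    have h1 : DifferentiableAt ℂ (G n i) ((fun u : ℂ => (Function.update A k u, K)) (A k)) := by
      simp only [hAself]
      exact differentiableAt_G i hA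
    exact h1.comp (A k) (hcurve (A k)).differentiableAt
  set D : ℕ → ℂ := fun i => deriv (fun u => G n i (Function.update A k u, K)) (A k) with hDdef
  have hDd : ∀ i, HasDerivAt (fun u => G n i (Function.update A k u, K)) (D i) (A k) :=
    fun i => (hd i).hasDerivAt
  have hval : ∀ m : Fin n, ∀ᶠ u in nhds (A k),
      ∑ i ∈ Finset.range n, G n i (Function.update A k u, K) * (Function.update A k u m) ^ i
        = K m := by
    intro m
    filter_upwards [injective_update_eventually hA k] with u hu
    have h1 := Lagrange.eval_interpolate_at_node (v := Function.update A k u) (r := K)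
      hu.injOn (Finset.mem_univ m)
    rw [Polynomial.eval_eq_sum_range' (natDegree_interpolate_lt hn _ _)] at h1
    exact h1
  have key : ∀ m : Fin n, HasDerivAt (fun u =>
      ∑ i ∈ Finset.range n, G n i (Function.update A k u, K) * (Function.update A k u m) ^ i)
      0 (A k) := by
    intro m
    exact (hasDerivAt_const (A k) (K m)).congr_of_eventuallyEq (hval m)
  have eq1 : ∀ m : Fin n, m ≠ k → ∑ i ∈ Finset.range n, D i * (A m) ^ i = 0 := by
    intro m hm
    have hcst : ∀ u : ℂ, Function.update A k u m = A m :=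
      fun u => Function.update_of_ne hm u A
    have h2 : HasDerivAt (fun u =>
        ∑ i ∈ Finset.range n, G n i (Function.update A k u, K) * (Function.update A k u m) ^ i)
        (∑ i ∈ Finset.range n, D i * (A m) ^ i) (A k) := by
      refine HasDerivAt.fun_sum fun i _ => ?_
      simp only [hcst]
      exact (hDd i).mul_const ((A m) ^ i)
    exact h2.unique (key m)
  have eq2 : ∑ i ∈ Finset.range n,
      (D i * (A k) ^ i + G n i (A, K) * (i * (A k) ^ (i - 1))) = 0 := by
    have h2 : HasDerivAt (fun u =>
        ∑ i ∈ Finset.range n, G n i (Function.update A k u, K) * (Function.update A k u k) ^ i)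
        (∑ i ∈ Finset.range n,
          (D i * (A k) ^ i + G n i (A, K) * (i * (A k) ^ (i - 1)))) (A k) := by
      refine HasDerivAt.fun_sum fun i _ => ?_
      have h3 : HasDerivAt (fun u : ℂ => u ^ i) ((i : ℂ) * (A k) ^ (i - 1)) (A k) :=
        hasDerivAt_pow i (A k)
      have h4 := (hDd i).fun_mul h3
      simp only [hAself] at h4
      simpa only [Function.update_self] using h4
    exact h2.unique (key k)
  set S : ℂ := ∑ i ∈ Finset.range n, G n i (A, K) * (i * (A k) ^ (i - 1)) with hSdef
  have eq2' : ∑ i ∈ Finset.range n, D i * (A k) ^ i = -S := by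
    rw [Finset.sum_add_distrib] at eq2
    exact eq_neg_of_add_eq_zero_left eq2
  have hBsum : ∀ x : ℂ, ∑ i ∈ Finset.range n, B n i k A * x ^ i
      = (Lagrange.basis Finset.univ A k).eval x :=
    fun x => (Polynomial.eval_eq_sum_range' (natDegree_basis_lt hn A k) x).symm
  have hBk : ∑ i ∈ Finset.range n, B n i k A * (A k) ^ i = 1 := by
    rw [hBsum]
    exact Lagrange.eval_basis_self hA.injOn (Finset.mem_univ k)
  have hBm : ∀ m : Fin n, m ≠ k → ∑ i ∈ Finset.range n, B n i k A * (A m) ^ i = 0 := by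
    intro m hm
    rw [hBsum]
    exact Lagrange.eval_basis_of_ne (Ne.symm hm) (Finset.mem_univ m)
  refine ⟨-S, fun i => ?_⟩
  rcases lt_or_ge i n with hi | hi
  · suffices hsuff : D i = -S * B n i k A by rw [← hsuff]; exact hDd i
    set q : Polynomial ℂ :=
      ∑ i' ∈ Finset.range n, Polynomial.C (D i' - -S * B n i' k A) * Polynomial.X ^ i' with hqdef
    have hqeval : ∀ x : ℂ, q.eval x = ∑ i' ∈ Finset.range n,
        (D i' - -S * B n i' k A) * x ^ i' := by
      intro x
      simp [hqdef, Polynomial.eval_finset_sum]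
    have hq0 : ∀ m : Fin n, q.eval (A m) = 0 := by
      intro m
      rw [hqeval]
      simp only [sub_mul, Finset.sum_sub_distrib, mul_assoc, ← Finset.mul_sum]
      rcases eq_or_ne m k with h | h
      · subst h
        rw [eq2', hBk]
        ring
      · rw [eq1 m h, hBm m h]
        ring
    have hqcoeff : ∀ j : ℕ, q.coeff j
        = if j ∈ Finset.range n then D j - -S * B n j k A else 0 := by
      intro j
      rw [hqdef, Polynomial.finset_sum_coeff]
      simp only [Polynomial.coeff_C_mul, Polynomial.coeff_X_pow]
      rw [Finset.sum_congr rfl (fun i' _ => mul_ite (j = i') (D i' - -S * B n i' k A) 1 0)]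
      simp [Finset.sum_ite_eq]
    have hqdeg : q.degree < ((Finset.univ : Finset (Fin n)).card : WithBot ℕ) := by
      rw [Finset.card_univ, Fintype.card_fin, Polynomial.degree_lt_iff_coeff_zero]
      intro m hm
      rw [hqcoeff]
      have : m ∉ Finset.range n := by
        simp only [Finset.mem_range, not_lt]
        exact_mod_cast hm
      simp [this]
    have hq : q = 0 :=
      Polynomial.eq_zero_of_degree_lt_of_eval_index_eq_zero (v := A) Finset.univ hA.injOn hqdeg
        (fun m _ => hq0 m)
    have hc : q.coeff i = 0 := by rw [hq]; simp
    rw [hqcoeff i, if_pos (Finset.mem_range.mpr hi)] at hc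
    linear_combination hc
  · have h0 : (fun u => G n i (Function.update A k u, K)) = fun _ : ℂ => (0 : ℂ) :=
      funext fun u => G_eq_zero i _ hi
    rw [B_eq_zero i k A hi, mul_zero, h0]
    exact hasDerivAt_const _ _

end LCM17


open LCM17 in
/-- along any solution of the canonical Hamiltonian system whose
Hamiltonian is a polynomial `P` in the Lagrange coefficients `F₀, …, F_{n−1}`, each
Lagrange coefficient is a constant of motion. -/
theorem lagrange_coeffs_constants_of_motion (n : ℕ)
    (P : MvPolynomial (Fin n) ℂ)
    (H : ((Fin n → ℂ) × (Fin n → ℂ)) → ℂ)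
    (hH : H = fun p =>
      MvPolynomial.eval (fun i : Fin n =>
        (Lagrange.interpolate Finset.univ p.1 p.2).coeff (i : ℕ)) P)
    (a κ : ℝ → Fin n → ℂ)
    (ha : ∀ t, Function.Injective (a t))
    (hda : ∀ k, Differentiable ℝ fun t => a t k)
    (hdκ : ∀ k, Differentiable ℝ fun t => κ t k)
    (hamA : ∀ (t : ℝ) (k : Fin n),
      deriv (fun s : ℝ => a s k) t
        = deriv (fun u : ℂ => H (a t, Function.update (κ t) k u)) (κ t k))
    (hamK : ∀ (t : ℝ) (k : Fin n),
      deriv (fun s : ℝ => κ s k) t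
        = - deriv (fun u : ℂ => H (Function.update (a t) k u, κ t)) (a t k)) :
    ∀ (i : ℕ) (t : ℝ),
      deriv (fun s : ℝ =>
        (Lagrange.interpolate Finset.univ (a s) (κ s)).coeff i) t = 0 := by
  classical
  intro i t
  set A : Fin n → ℂ := a t with hAdef
  set K : Fin n → ℂ := κ t with hKdef
  have hA : Function.Injective A := ha t
  -- the common proportionality factors
  have hcs : ∀ k : Fin n, ∃ c : ℂ, ∀ i : ℕ,
      HasDerivAt (fun u => G n i (Function.update A k u, K)) (c * B n i k A) (A k) :=
    fun k => exists_c K hA k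
  choose c hc using hcs
  -- the gradient coefficients of the Hamiltonian
  set Pj : Fin n → ℂ :=
    fun j => MvPolynomial.eval (fun j' : Fin n => G n (j' : ℕ) (A, K))
      (MvPolynomial.pderiv j P) with hPjdef
  -- partial derivatives of H
  have hHκ : ∀ k : Fin n, deriv (fun u : ℂ => H (A, Function.update K k u)) (K k)
      = ∑ j : Fin n, Pj j * B n (j : ℕ) k A := by
    intro k
    have hg : ∀ j : Fin n, HasDerivAt (fun u => G n (j : ℕ) (A, Function.update K k u))
        (B n (j : ℕ) k A) (K k) := fun j => hasDerivAt_G_kappa _ A K k (K k)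
    have h1 := hasDerivAt_mv_eval hg P
    have h2 : (fun u : ℂ => H (A, Function.update K k u))
        = fun u => MvPolynomial.eval (fun j : Fin n => G n (j : ℕ) (A, Function.update K k u)) P := by
      rw [hH]; rfl
    rw [h2]
    have h3 : (fun j : Fin n => G n (j : ℕ) (A, Function.update K k (K k)))
        = fun j' : Fin n => G n (j' : ℕ) (A, K) := by
      rw [Function.update_eq_self]
    rw [h3] at h1
    exact h1.deriv
  have hHa : ∀ k : Fin n, deriv (fun u : ℂ => H (Function.update A k u, K)) (A k)
      = ∑ j : Fin n, Pj j * (c k * B n (j : ℕ) k A) := by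
    intro k
    have hg : ∀ j : Fin n, HasDerivAt (fun u => G n (j : ℕ) (Function.update A k u, K))
        (c k * B n (j : ℕ) k A) (A k) := fun j => hc k (j : ℕ)
    have h1 := hasDerivAt_mv_eval hg P
    have h2 : (fun u : ℂ => H (Function.update A k u, K))
        = fun u => MvPolynomial.eval (fun j : Fin n => G n (j : ℕ) (Function.update A k u, K)) P := by
      rw [hH]; rfl
    rw [h2]
    have h3 : (fun j : Fin n => G n (j : ℕ) (Function.update A k (A k), K))
        = fun j' : Fin n => G n (j' : ℕ) (A, K) := by
      rw [Function.update_eq_self]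
    rw [h3] at h1
    exact h1.deriv
  -- total derivative of G n i along the flow
  set L : ((Fin n → ℂ) × (Fin n → ℂ)) →L[ℂ] ℂ := fderiv ℂ (G n i) (A, K) with hLdef
  have hL : HasFDerivAt (G n i) L (A, K) := (differentiableAt_G i hA).hasFDerivAt
  -- identify L on basis vectors
  have hLa : ∀ k : Fin n, L ((Pi.single k 1 : Fin n → ℂ), (0 : Fin n → ℂ))
      = c k * B n i k A := by
    intro k
    have hcurve : HasDerivAt (fun u : ℂ => (Function.update A k u, K))
        ((Pi.single k 1 : Fin n → ℂ), (0 : Fin n → ℂ)) (A k) :=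
      (LCM17.hasDerivAt_update A k (A k)).prodMk (hasDerivAt_const _ K)
    have hL' : HasFDerivAt (G n i) L ((fun u : ℂ => (Function.update A k u, K)) (A k)) := by
      simp only [Function.update_eq_self]
      exact hL
    have hcomp := hL'.comp_hasDerivAt (A k) hcurve
    exact hcomp.unique (hc k i)
  have hLκ : ∀ k : Fin n, L ((0 : Fin n → ℂ), (Pi.single k 1 : Fin n → ℂ))
      = B n i k A := by
    intro k
    have hcurve : HasDerivAt (fun u : ℂ => (A, Function.update K k u))
        ((0 : Fin n → ℂ), (Pi.single k 1 : Fin n → ℂ)) (K k) :=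
      (hasDerivAt_const _ A).prodMk (LCM17.hasDerivAt_update K k (K k))
    have hL' : HasFDerivAt (G n i) L ((fun u : ℂ => (A, Function.update K k u)) (K k)) := by
      simp only [Function.update_eq_self]
      exact hL
    have hcomp := hL'.comp_hasDerivAt (K k) hcurve
    exact hcomp.unique (hasDerivAt_G_kappa i A K k (K k))
  -- velocity of the curve
  set va : Fin n → ℂ := fun k => deriv (fun s : ℝ => a s k) t with hvadef
  set vκ : Fin n → ℂ := fun k => deriv (fun s : ℝ => κ s k) t with hvκdef
  have hγ : HasDerivAt (fun s : ℝ => (a s, κ s)) (va, vκ) t := by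
    apply HasDerivAt.prodMk
    · exact hasDerivAt_pi.mpr fun j => ((hda j) t).hasDerivAt
    · exact hasDerivAt_pi.mpr fun j => ((hdκ j) t).hasDerivAt
  have hcomp : HasDerivAt (fun s : ℝ => G n i (a s, κ s)) (L (va, vκ)) t :=
    by have hLR := hL.restrictScalars ℝ; have := hLR.comp_hasDerivAt t hγ; exact this
  have hderiv : deriv (fun s : ℝ =>
      (Lagrange.interpolate Finset.univ (a s) (κ s)).coeff i) t = L (va, vκ) := hcomp.deriv
  rw [hderiv]
  -- decompose the velocity
  have hsingle : ∀ w : Fin n → ℂ, ∑ k, w k • (Pi.single k 1 : Fin n → ℂ) = w := by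
    intro w
    funext j
    simp [Finset.sum_apply, Pi.single_apply]
  have hvsum : ((va, vκ) : (Fin n → ℂ) × (Fin n → ℂ))
      = (∑ k, va k • (((Pi.single k 1 : Fin n → ℂ), (0 : Fin n → ℂ))
          : (Fin n → ℂ) × (Fin n → ℂ)))
        + ∑ k, vκ k • (((0 : Fin n → ℂ), (Pi.single k 1 : Fin n → ℂ))
          : (Fin n → ℂ) × (Fin n → ℂ)) := by
    rw [Prod.ext_iff]
    constructor
    · simp [Prod.fst_sum, hsingle]
    · simp [Prod.snd_sum, hsingle]
  rw [hvsum, map_add, map_sum, map_sum]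
  simp only [map_smul, smul_eq_mul, hLa, hLκ]
  -- substitute Hamilton's equations
  have hva : ∀ k, va k = ∑ j : Fin n, Pj j * B n (j : ℕ) k A := by
    intro k
    rw [hvadef]
    simp only
    rw [hamA t k, ← hAdef, ← hKdef, hHκ k]
  have hvκ : ∀ k, vκ k = -∑ j : Fin n, Pj j * (c k * B n (j : ℕ) k A) := by
    intro k
    rw [hvκdef]
    simp only
    rw [hamK t k, ← hAdef, ← hKdef, hHa k]
  rw [← Finset.sum_add_distrib]
  apply Finset.sum_eq_zero
  intro k _
  rw [hva k, hvκ k]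
  have hfac : ∑ j : Fin n, Pj j * (c k * B n (j : ℕ) k A)
      = c k * ∑ j : Fin n, Pj j * B n (j : ℕ) k A := by
    rw [Finset.mul_sum]
    exact Finset.sum_congr rfl fun j _ => by ring
  rw [hfac]
  ring
end
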